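/- Let Ω be a finite set and let f : Finset Ω → ℝ be monotone and submodular. Then the extension f̂ : (Ω → ℝ≥0) → ℝ is monotone and submodular on the lattice of non-negative vectors: (i) if P(u) ≤ Q(u) for all u ∈ Ω then f̂(P) ≤ f̂(Q); (ii) for all non-negative P, Q : Ω → ℝ, f̂(max(P,Q)) + f̂(min(P,Q)) ≤ f̂(P) + f̂(Q), where max and min are taken pointwise. -/

import Mathlib

open Finset

/-- The multilinear-style extension `f̂` of a set function `f`:
the expectation of `f` over the random subset that includes each `u`
independently with probability `1 - exp (-S u)`. -/
noncomputable def fhat {Ω : Type*} [Fintype Ω] [DecidableEq Ω]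
    (f : Finset Ω → ℝ) (S : Ω → ℝ) : ℝ :=
  ∑ T : Finset Ω, f T *
    ((∏ u ∈ T, (1 - Real.exp (-S u))) * ∏ u ∈ Tᶜ, Real.exp (-S u))


/-- Partial multilinear extension over a ground finset `s`. -/
noncomputable def mExt {Ω : Type*} [DecidableEq Ω]
    (g : Finset Ω → ℝ) (s : Finset Ω) (p : Ω → ℝ) : ℝ :=
  ∑ T ∈ s.powerset, g T * ((∏ v ∈ T, p v) * ∏ v ∈ s \ T, (1 - p v))

lemma Ext_insert {Ω : Type*} [DecidableEq Ω] (g : Finset Ω → ℝ) {s : Finset Ω}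
    {u : Ω} (hu : u ∉ s) (p : Ω → ℝ) :
    mExt g (insert u s) p
      = (1 - p u) * mExt g s p + p u * mExt (fun T => g (insert u T)) s p := by
  unfold mExt
  rw [Finset.sum_powerset_insert hu, Finset.mul_sum, Finset.mul_sum]
  congr 1
  · refine Finset.sum_congr rfl fun T hT => ?_
    rw [Finset.mem_powerset] at hT
    have huT : u ∉ T := fun h => hu (hT h)
    have h1 : insert u s \ T = insert u (s \ T) := by
      ext v; simp only [Finset.mem_sdiff, Finset.mem_insert]
      constructor
      · rintro ⟨h | h, h2⟩
        · exact Or.inl h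
        · exact Or.inr ⟨h, h2⟩
      · rintro (rfl | ⟨h1, h2⟩)
        · exact ⟨Or.inl rfl, huT⟩
        · exact ⟨Or.inr h1, h2⟩
    have huS : u ∉ s \ T := fun h => hu (Finset.mem_sdiff.mp h).1
    rw [h1, Finset.prod_insert huS]
    ring
  · refine Finset.sum_congr rfl fun T hT => ?_
    rw [Finset.mem_powerset] at hT
    have huT : u ∉ T := fun h => hu (hT h)
    have h1 : insert u s \ insert u T = s \ T := by
      ext v; simp only [Finset.mem_sdiff, Finset.mem_insert, not_or]
      constructor
      · rintro ⟨h | h, h2, h3⟩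
        · exact absurd h h2
        · exact ⟨h, h3⟩
      · rintro ⟨h1, h2⟩
        exact ⟨Or.inr h1, fun e => hu (e ▸ h1), h2⟩
    rw [h1, Finset.prod_insert huT]
    ring

lemma Ext_congr {Ω : Type*} [DecidableEq Ω] (g : Finset Ω → ℝ) (s : Finset Ω)
    {p q : Ω → ℝ} (h : ∀ v ∈ s, p v = q v) : mExt g s p = mExt g s q := by
  unfold mExt
  refine Finset.sum_congr rfl fun T hT => ?_
  rw [Finset.mem_powerset] at hT
  congr 1
  congr 1
  · exact Finset.prod_congr rfl fun v hv => h v (hT hv)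
  · exact Finset.prod_congr rfl fun v hv => by
      rw [h v (Finset.mem_sdiff.mp hv).1]

lemma Ext_mono_g {Ω : Type*} [DecidableEq Ω] {g1 g2 : Finset Ω → ℝ}
    {s : Finset Ω} {p : Ω → ℝ} (hp0 : ∀ v, 0 ≤ p v) (hp1 : ∀ v, p v ≤ 1)
    (hg : ∀ T ∈ s.powerset, g1 T ≤ g2 T) : mExt g1 s p ≤ mExt g2 s p := by
  refine Finset.sum_le_sum fun T hT => ?_
  have hw : 0 ≤ (∏ v ∈ T, p v) * ∏ v ∈ s \ T, (1 - p v) := by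
    apply mul_nonneg
    · exact Finset.prod_nonneg fun v _ => hp0 v
    · exact Finset.prod_nonneg fun v _ => by linarith [hp1 v]
  exact mul_le_mul_of_nonneg_right (hg T hT) hw

lemma Ext_neg {Ω : Type*} [DecidableEq Ω] (g : Finset Ω → ℝ) (s : Finset Ω)
    (p : Ω → ℝ) : mExt (fun T => -g T) s p = -mExt g s p := by
  unfold mExt
  rw [← Finset.sum_neg_distrib]
  exact Finset.sum_congr rfl fun T _ => by ring

lemma Ext_sub {Ω : Type*} [DecidableEq Ω] (g1 g2 : Finset Ω → ℝ) (s : Finset Ω)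
    (p : Ω → ℝ) :
    mExt (fun T => g1 T - g2 T) s p = mExt g1 s p - mExt g2 s p := by
  unfold mExt
  rw [← Finset.sum_sub_distrib]
  exact Finset.sum_congr rfl fun T _ => by ring

lemma Ext_mono_p {Ω : Type*} [DecidableEq Ω] {p q : Ω → ℝ}
    (hp0 : ∀ v, 0 ≤ p v) (hp1 : ∀ v, p v ≤ 1)
    (hq0 : ∀ v, 0 ≤ q v) (hq1 : ∀ v, q v ≤ 1) (hpq : ∀ v, p v ≤ q v) :
    ∀ (s : Finset Ω) (g : Finset Ω → ℝ),
      (∀ A B : Finset Ω, A ⊆ B → B ⊆ s → g A ≤ g B) →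
      mExt g s p ≤ mExt g s q := by
  intro s
  induction s using Finset.induction_on with
  | empty => intro g _; simp [mExt]
  | @insert u s hu ih =>
    intro g hg
    rw [Ext_insert g hu p, Ext_insert g hu q]
    have h1 : mExt g s p ≤ mExt g s q :=
      ih g fun A B hAB hBs => hg A B hAB (hBs.trans (Finset.subset_insert u s))
    have h2 : mExt (fun T => g (insert u T)) s p ≤ mExt (fun T => g (insert u T)) s q :=
      ih _ fun A B hAB hBs =>
        hg (insert u A) (insert u B) (Finset.insert_subset_insert u hAB)
          (Finset.insert_subset_insert u hBs)
    have h3 : mExt g s q ≤ mExt (fun T => g (insert u T)) s q := by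
      refine Ext_mono_g hq0 hq1 fun T hT => ?_
      rw [Finset.mem_powerset] at hT
      exact hg T (insert u T) (Finset.subset_insert u T)
        (Finset.insert_subset_insert u hT)
    nlinarith [hp0 u, hp1 u, hq0 u, hq1 u, hpq u,
      mul_le_mul_of_nonneg_left h1 (by linarith [hp1 u] : (0:ℝ) ≤ 1 - p u),
      mul_le_mul_of_nonneg_left h2 (hp0 u),
      mul_le_mul_of_nonneg_left h3 (by linarith [hpq u] : (0:ℝ) ≤ q u - p u)]

lemma Ext_anti_p {Ω : Type*} [DecidableEq Ω] {p q : Ω → ℝ}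
    (hp0 : ∀ v, 0 ≤ p v) (hp1 : ∀ v, p v ≤ 1)
    (hq0 : ∀ v, 0 ≤ q v) (hq1 : ∀ v, q v ≤ 1) (hpq : ∀ v, p v ≤ q v)
    (s : Finset Ω) (g : Finset Ω → ℝ)
    (hg : ∀ A B : Finset Ω, A ⊆ B → B ⊆ s → g B ≤ g A) :
    mExt g s q ≤ mExt g s p := by
  have := Ext_mono_p hp0 hp1 hq0 hq1 hpq s (fun T => -g T)
    (fun A B hAB hBs => neg_le_neg (hg A B hAB hBs))
  rw [Ext_neg, Ext_neg] at this
  linarith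

lemma Ext_update {Ω : Type*} [DecidableEq Ω] (g : Finset Ω → ℝ) {s : Finset Ω}
    {u : Ω} (hu : u ∉ s) (x : Ω → ℝ) (c : ℝ) :
    mExt g s (Function.update x u c) = mExt g s x :=
  Ext_congr g s fun v hv => Function.update_of_ne (by rintro rfl; exact hu hv) c x

lemma F_update {Ω : Type*} [Fintype Ω] [DecidableEq Ω] (f : Finset Ω → ℝ)
    (u : Ω) (x : Ω → ℝ) (c : ℝ) :
    mExt f Finset.univ (Function.update x u c)
      = (1 - c) * mExt f (Finset.univ.erase u) x
        + c * mExt (fun T => f (insert u T)) (Finset.univ.erase u) x := by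
  conv_lhs => rw [← Finset.insert_erase (Finset.mem_univ u)]
  rw [Ext_insert f (Finset.notMem_erase u _) (Function.update x u c),
    Function.update_self, Ext_update f (Finset.notMem_erase u _),
    Ext_update _ (Finset.notMem_erase u _)]

/-- Decreasing differences for the multilinear extension of a submodular function. -/
lemma dd {Ω : Type*} [Fintype Ω] [DecidableEq Ω] (f : Finset Ω → ℝ)
    (hsub : ∀ A B : Finset Ω, f (A ∪ B) + f (A ∩ B) ≤ f A + f B)
    (u : Ω) {x y : Ω → ℝ}
    (hx0 : ∀ v, 0 ≤ x v) (hx1 : ∀ v, x v ≤ 1)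
    (hy0 : ∀ v, 0 ≤ y v) (hy1 : ∀ v, y v ≤ 1) (hxy : ∀ v, x v ≤ y v)
    {a b : ℝ} (hab : a ≤ b) :
    mExt f Finset.univ (Function.update y u b) - mExt f Finset.univ (Function.update y u a)
      ≤ mExt f Finset.univ (Function.update x u b)
        - mExt f Finset.univ (Function.update x u a) := by
  rw [F_update, F_update, F_update, F_update]
  set s := Finset.univ.erase u with hs
  set Δ : Finset Ω → ℝ := fun T => f (insert u T) - f T with hΔ
  have key : mExt Δ s y ≤ mExt Δ s x := by
    refine Ext_anti_p hx0 hx1 hy0 hy1 hxy s Δ ?_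
    intro A B hAB hBs
    have huB : u ∉ B := fun h => (Finset.mem_erase.mp (hBs h)).1 rfl
    have h := hsub (insert u A) B
    have h1 : insert u A ∪ B = insert u B := by
      rw [Finset.insert_union, Finset.union_eq_right.mpr hAB]
    have h2 : insert u A ∩ B = A := by
      rw [Finset.insert_inter_of_notMem huB, Finset.inter_eq_left.mpr hAB]
    rw [h1, h2] at h
    simp only [hΔ]
    linarith
  have hxe : mExt Δ s x
      = mExt (fun T => f (insert u T)) s x - mExt f s x := Ext_sub _ _ _ _
  have hye : mExt Δ s y
      = mExt (fun T => f (insert u T)) s y - mExt f s y := Ext_sub _ _ _ _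
  nlinarith [key, hxe, hye, hab]

lemma submod_aux {Ω : Type*} [Fintype Ω] [DecidableEq Ω] (f : Finset Ω → ℝ)
    (hsub : ∀ A B : Finset Ω, f (A ∪ B) + f (A ∩ B) ≤ f A + f B) :
    ∀ (n : ℕ) (p q : Ω → ℝ), (∀ v, 0 ≤ p v) → (∀ v, p v ≤ 1) →
      (∀ v, 0 ≤ q v) → (∀ v, q v ≤ 1) →
      (Finset.univ.filter fun v => q v < p v).card = n →
      mExt f Finset.univ (fun v => max (p v) (q v))
        + mExt f Finset.univ (fun v => min (p v) (q v))
        ≤ mExt f Finset.univ p + mExt f Finset.univ q := by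
  intro n
  induction n with
  | zero =>
    intro p q hp0 hp1 hq0 hq1 hcard
    have hfil : ∀ v, p v ≤ q v := by
      intro v
      by_contra h
      have hv : v ∈ Finset.univ.filter fun v => q v < p v := by
        simp [lt_of_not_ge h]
      rw [Finset.card_eq_zero.mp hcard] at hv
      exact absurd hv (Finset.notMem_empty v)
    have h1 : (fun v => max (p v) (q v)) = q := funext fun v => max_eq_right (hfil v)
    have h2 : (fun v => min (p v) (q v)) = p := funext fun v => min_eq_left (hfil v)
    rw [h1, h2]; linarith
  | succ n ih =>
    intro p q hp0 hp1 hq0 hq1 hcard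
    have hne : (Finset.univ.filter fun v => q v < p v).Nonempty := by
      rw [← Finset.card_pos, hcard]; omega
    obtain ⟨u, hu⟩ := hne
    have hqp : q u < p u := (Finset.mem_filter.mp hu).2
    set p' : Ω → ℝ := Function.update p u (q u) with hp'
    have hp'0 : ∀ v, 0 ≤ p' v := by
      intro v; by_cases h : v = u
      · rw [hp', h, Function.update_self]; exact hq0 u
      · rw [hp', Function.update_of_ne h]; exact hp0 v
    have hp'1 : ∀ v, p' v ≤ 1 := by
      intro v; by_cases h : v = u
      · rw [hp', h, Function.update_self]; exact hq1 u
      · rw [hp', Function.update_of_ne h]; exact hp1 v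
    have hcard' : (Finset.univ.filter fun v => q v < p' v).card = n := by
      have hset : (Finset.univ.filter fun v => q v < p' v)
          = (Finset.univ.filter fun v => q v < p v).erase u := by
        ext v
        simp only [Finset.mem_filter, Finset.mem_erase, Finset.mem_univ, true_and]
        by_cases h : v = u
        · subst h; simp [hp', lt_irrefl]
        · simp [hp', Function.update_of_ne h, h]
      rw [hset, Finset.card_erase_of_mem hu, hcard]
      omega
    have hIH := ih p' q hp'0 hp'1 hq0 hq1 hcard'
    -- identify the vectors
    have hmin : (fun v => min (p' v) (q v)) = fun v => min (p v) (q v) := by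
      funext v; by_cases h : v = u
      · subst h; simp [hp', min_eq_right (le_of_lt hqp)]
      · simp [hp', Function.update_of_ne h]
    set y : Ω → ℝ := fun v => max (p v) (q v) with hy
    have hy0 : ∀ v, 0 ≤ y v := fun v => le_trans (hp0 v) (le_max_left _ _)
    have hy1 : ∀ v, y v ≤ 1 := fun v => max_le (hp1 v) (hq1 v)
    have hpy : ∀ v, p v ≤ y v := fun v => le_max_left _ _
    have hupd1 : Function.update y u (p u) = y := by
      have : y u = p u := max_eq_left (le_of_lt hqp)
      rw [← this]; exact Function.update_eq_self u y
    have hupd2 : Function.update y u (q u) = fun v => max (p' v) (q v) := by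
      funext v; by_cases h : v = u
      · subst h; simp [hp', Function.update_self, max_self]
      · simp [hp', hy, Function.update_of_ne h]
    have hupd3 : Function.update p u (p u) = p := Function.update_eq_self u p
    have hdd := dd f hsub u hp0 hp1 hy0 hy1 hpy (le_of_lt hqp)
    rw [hupd1, hupd2, hupd3] at hdd
    rw [hmin] at hIH
    linarith

lemma fhat_eq_Ext {Ω : Type*} [Fintype Ω] [DecidableEq Ω] (f : Finset Ω → ℝ)
    (S : Ω → ℝ) : fhat f S = mExt f Finset.univ (fun u => 1 - Real.exp (-S u)) := by
  unfold fhat mExt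
  rw [← Finset.powerset_univ]
  refine Finset.sum_congr rfl fun T _ => ?_
  congr 1
  congr 1
  rw [Finset.compl_eq_univ_sdiff]
  exact Finset.prod_congr rfl fun v _ => by ring

theorem fhat_monotone_and_submodular {Ω : Type*} [Fintype Ω] [DecidableEq Ω]
    (f : Finset Ω → ℝ)
    (hmono : ∀ A B : Finset Ω, A ⊆ B → f A ≤ f B)
    (hsub : ∀ A B : Finset Ω, f (A ∪ B) + f (A ∩ B) ≤ f A + f B) :
    (∀ P Q : Ω → ℝ, (∀ u, 0 ≤ P u) → (∀ u, 0 ≤ Q u) → (∀ u, P u ≤ Q u) →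
      fhat f P ≤ fhat f Q) ∧
    (∀ P Q : Ω → ℝ, (∀ u, 0 ≤ P u) → (∀ u, 0 ≤ Q u) →
      fhat f (fun u => max (P u) (Q u)) + fhat f (fun u => min (P u) (Q u)) ≤
        fhat f P + fhat f Q) := by
  have hb0 : ∀ (P : Ω → ℝ), (∀ u, 0 ≤ P u) → ∀ u, (0:ℝ) ≤ 1 - Real.exp (-P u) := by
    intro P hP u
    have : Real.exp (-P u) ≤ 1 := Real.exp_le_one_iff.mpr (by linarith [hP u])
    linarith
  have hb1 : ∀ (P : Ω → ℝ) (u : Ω), (1 - Real.exp (-P u) : ℝ) ≤ 1 := by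
    intro P u; linarith [Real.exp_pos (-P u)]
  constructor
  · intro P Q hP hQ hPQ
    rw [fhat_eq_Ext, fhat_eq_Ext]
    refine Ext_mono_p (hb0 P hP) (hb1 P) (hb0 Q hQ) (hb1 Q) ?_ Finset.univ f
      (fun A B hAB _ => hmono A B hAB)
    intro u
    have : Real.exp (-Q u) ≤ Real.exp (-P u) := Real.exp_le_exp.mpr (by linarith [hPQ u])
    linarith
  · intro P Q hP hQ
    rw [fhat_eq_Ext, fhat_eq_Ext, fhat_eq_Ext, fhat_eq_Ext]
    have hmax : (fun u => 1 - Real.exp (-(fun u => max (P u) (Q u)) u))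
        = fun u => max (1 - Real.exp (-P u)) (1 - Real.exp (-Q u)) := by
      funext u
      show 1 - Real.exp (-(max (P u) (Q u))) = max (1 - Real.exp (-P u)) (1 - Real.exp (-Q u))
      rcases le_total (P u) (Q u) with h | h
      · rw [show max (P u) (Q u) = Q u from max_eq_right h,
          max_eq_right (by linarith [Real.exp_le_exp.mpr (neg_le_neg h)] : (1:ℝ) - Real.exp (-P u) ≤ 1 - Real.exp (-Q u))]
      · rw [show max (P u) (Q u) = P u from max_eq_left h,
          max_eq_left (by linarith [Real.exp_le_exp.mpr (neg_le_neg h)] : (1:ℝ) - Real.exp (-Q u) ≤ 1 - Real.exp (-P u))]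
    have hmin : (fun u => 1 - Real.exp (-(fun u => min (P u) (Q u)) u))
        = fun u => min (1 - Real.exp (-P u)) (1 - Real.exp (-Q u)) := by
      funext u
      show 1 - Real.exp (-(min (P u) (Q u))) = min (1 - Real.exp (-P u)) (1 - Real.exp (-Q u))
      rcases le_total (P u) (Q u) with h | h
      · rw [show min (P u) (Q u) = P u from min_eq_left h,
          min_eq_left (by linarith [Real.exp_le_exp.mpr (neg_le_neg h)] : (1:ℝ) - Real.exp (-P u) ≤ 1 - Real.exp (-Q u))]
      · rw [show min (P u) (Q u) = Q u from min_eq_right h,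
          min_eq_right (by linarith [Real.exp_le_exp.mpr (neg_le_neg h)] : (1:ℝ) - Real.exp (-Q u) ≤ 1 - Real.exp (-P u))]
    rw [hmax, hmin]
    exact submod_aux f hsub _ _ _ (hb0 P hP) (hb1 P) (hb0 Q hQ) (hb1 Q) rfl
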